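/- Let P be a d×d symmetric positive definite matrix. Then Σ = P^{1/2} is the unique symmetric positive definite minimizer of F(Σ) = log det Σ + tr(Σ⁻¹ P) + D_vN(I, Σ), where D_vN(I, Σ) = tr(−log Σ − I + Σ). -/

import Mathlib

open Matrix

namespace Matrix.PosSemidef

open scoped ComplexOrder

variable {n 𝕜 : Type*} [Fintype n] [RCLike 𝕜] [DecidableEq n] {A : Matrix n n 𝕜}

/-- The positive semidefinite square root of a positive semidefinite matrix
(the definition of Mathlib of December 2024, since removed). -/
noncomputable def sqrt (hA : PosSemidef A) : Matrix n n 𝕜 :=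
  hA.1.eigenvectorUnitary.1 * diagonal ((↑) ∘ (√·) ∘ hA.1.eigenvalues) *
    (star hA.1.eigenvectorUnitary : Matrix n n 𝕜)

lemma posSemidef_sqrt (hA : PosSemidef A) : PosSemidef hA.sqrt := by
  unfold sqrt
  rw [star_eq_conjTranspose]
  apply PosSemidef.mul_mul_conjTranspose_same
  apply PosSemidef.diagonal
  intro i
  simp only [Function.comp_apply, Pi.zero_apply]
  exact_mod_cast Real.sqrt_nonneg _

end Matrix.PosSemidef

namespace Matrix.PosSemidef

open scoped ComplexOrder

lemma sqrt_mul_self {n 𝕜 : Type*} [Fintype n] [RCLike 𝕜] [DecidableEq n] {A : Matrix n n 𝕜}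
    (hA : PosSemidef A) : hA.sqrt * hA.sqrt = A := by
  have hU : (star hA.1.eigenvectorUnitary : Matrix n n 𝕜) * hA.1.eigenvectorUnitary.1 = 1 :=
    Unitary.coe_star_mul_self _
  unfold sqrt
  conv_rhs => rw [hA.1.spectral_theorem, Unitary.conjStarAlgAut_apply]
  simp only [mul_assoc]
  rw [← mul_assoc (star hA.1.eigenvectorUnitary : Matrix n n 𝕜), hU, one_mul,
    ← mul_assoc (diagonal _), diagonal_mul_diagonal]
  congr 3
  funext i
  simp only [Function.comp_apply]
  rw [← RCLike.ofReal_mul, Real.mul_self_sqrt (hA.eigenvalues_nonneg i)]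

end Matrix.PosSemidef

/-- The vN-regularized MLE objective: `log det S + tr(S⁻¹ P) + tr(−log S − I + S)`,
where `tr(log S) = ∑ᵢ log λᵢ(S)` is computed spectrally. -/
noncomputable def vnMLEObjective {d : ℕ} (P : Matrix (Fin d) (Fin d) ℝ)
    (S : Matrix (Fin d) (Fin d) ℝ) (hS : S.IsHermitian) : ℝ :=
  Real.log S.det + (S⁻¹ * P).trace +
    (-(∑ i, Real.log (hS.eigenvalues i)) - (d : ℝ) + S.trace)


/-- trace of `Bᴴ * B` is a sum of squares. -/
private lemma trace_conjT_mul_self {d : ℕ} (B : Matrix (Fin d) (Fin d) ℝ) :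
    (Bᴴ * B).trace = ∑ j, ∑ i, (B i j) ^ 2 := by
  simp [Matrix.trace, Matrix.mul_apply, Matrix.diag, sq]

private lemma trace_conjT_mul_self_nonneg {d : ℕ} (B : Matrix (Fin d) (Fin d) ℝ) :
    0 ≤ (Bᴴ * B).trace := by
  rw [trace_conjT_mul_self]
  exact Finset.sum_nonneg fun j _ => Finset.sum_nonneg fun i _ => sq_nonneg _

private lemma eq_zero_of_trace_conjT_mul_self {d : ℕ} {B : Matrix (Fin d) (Fin d) ℝ}
    (h : (Bᴴ * B).trace = 0) : B = 0 := by
  rw [trace_conjT_mul_self] at h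
  ext i j
  have h1 : ∀ j ∈ Finset.univ, (0:ℝ) ≤ ∑ i, (B i j) ^ 2 :=
    fun j _ => Finset.sum_nonneg fun i _ => sq_nonneg _
  have h2 := (Finset.sum_eq_zero_iff_of_nonneg h1).mp h j (Finset.mem_univ j)
  have h3 := (Finset.sum_eq_zero_iff_of_nonneg
    (fun i _ => sq_nonneg (B i j))).mp h2 i (Finset.mem_univ i)
  simpa using pow_eq_zero_iff (n := 2) (by norm_num) |>.mp h3

/-- Simplification of the objective when all eigenvalues are nonzero. -/
private lemma vn_simp {d : ℕ} (P S : Matrix (Fin d) (Fin d) ℝ) (hS : S.IsHermitian)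
    (h : ∀ i, hS.eigenvalues i ≠ 0) :
    vnMLEObjective P S hS = (S⁻¹ * P).trace + S.trace - d := by
  have hd : S.det = ∏ i, hS.eigenvalues i := by
    rw [hS.det_eq_prod_eigenvalues]; norm_num
  unfold vnMLEObjective
  rw [hd, Real.log_prod fun i _ => h i]
  ring
theorem sqrt_unique_minimizer_vnMLE (d : ℕ) (P : Matrix (Fin d) (Fin d) ℝ)
    (hP : P.PosDef) :
    ∀ S : Matrix (Fin d) (Fin d) ℝ, ∀ hS : S.PosDef,
      vnMLEObjective P hP.posSemidef.sqrt hP.posSemidef.posSemidef_sqrt.1 ≤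
        vnMLEObjective P S hS.1 ∧
      (vnMLEObjective P S hS.1 =
          vnMLEObjective P hP.posSemidef.sqrt hP.posSemidef.posSemidef_sqrt.1 →
        S = hP.posSemidef.sqrt) := by
  intro S hS
  set Q := hP.posSemidef.sqrt with hQdef
  have hQH : Q.IsHermitian := hP.posSemidef.posSemidef_sqrt.1
  have hQQ : Q * Q = P := hP.posSemidef.sqrt_mul_self
  -- det Q ≠ 0
  have hdetQ : Q.det ≠ 0 := by
    intro h
    have : P.det = 0 := by rw [← hQQ, det_mul, h, mul_zero]
    exact hP.det_pos.ne' this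
  have heigQ : ∀ i, hQH.eigenvalues i ≠ 0 := by
    intro i
    have hd : Q.det = ∏ i, hQH.eigenvalues i := by
      rw [hQH.det_eq_prod_eigenvalues]; norm_num
    rw [hd] at hdetQ
    exact Finset.prod_ne_zero_iff.mp hdetQ i (Finset.mem_univ i)
  have heigS : ∀ i, hS.1.eigenvalues i ≠ 0 := fun i => (hS.eigenvalues_pos i).ne'
  -- objective values
  have hQinv : Q⁻¹ * P = Q := by
    rw [← hQQ, ← mul_assoc, nonsing_inv_mul Q hdetQ.isUnit, one_mul]
  have hFQ : vnMLEObjective P Q hQH = 2 * Q.trace - d := by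
    rw [vn_simp P Q hQH heigQ, hQinv]; ring
  have hFS : vnMLEObjective P S hS.1 = (S⁻¹ * P).trace + S.trace - d :=
    vn_simp P S hS.1 heigS
  -- setup square root of S⁻¹
  have hSinv : S⁻¹.PosDef := hS.inv
  set R := hSinv.posSemidef.sqrt with hRdef
  have hRH : Rᴴ = R := hSinv.posSemidef.posSemidef_sqrt.1
  have hRR : R * R = S⁻¹ := hSinv.posSemidef.sqrt_mul_self
  have hSdet : IsUnit S.det := hS.det_pos.ne'.isUnit
  have hSinvS : S⁻¹ * S = 1 := nonsing_inv_mul S hSdet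
  have hSSinv : S * S⁻¹ = 1 := mul_nonsing_inv S hSdet
  set B := R * (Q - S) with hBdef
  have hQSH : (Q - S)ᴴ = Q - S := by rw [conjTranspose_sub, hQH.eq, hS.1.eq]
  have hBB : Bᴴ * B = (Q - S) * S⁻¹ * (Q - S) := by
    rw [hBdef, conjTranspose_mul, hQSH, hRH, ← hRR]
    simp only [mul_assoc]
  have key : (Bᴴ * B).trace = (S⁻¹ * P).trace + S.trace - 2 * Q.trace := by
    rw [hBB, ← Matrix.trace_mul_cycle S⁻¹ (Q - S) (Q - S)]
    have expand : S⁻¹ * (Q - S) * (Q - S) =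
        S⁻¹ * (Q * Q) - S⁻¹ * Q * S - (S⁻¹ * S) * Q + (S⁻¹ * S) * S := by
      noncomm_ring
    rw [expand, hQQ, hSinvS, one_mul, one_mul, trace_add, trace_sub, trace_sub]
    have h1 : (S⁻¹ * Q * S).trace = Q.trace := by
      rw [trace_mul_cycle, hSSinv, one_mul]
    rw [h1]; ring
  constructor
  · rw [hFQ, hFS]
    have := trace_conjT_mul_self_nonneg B
    rw [key] at this
    linarith
  · intro heq
    rw [hFQ, hFS] at heq
    have htr0 : (Bᴴ * B).trace = 0 := by rw [key]; linarith
    have hB0 : B = 0 := eq_zero_of_trace_conjT_mul_self htr0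
    have h1 : S⁻¹ * (Q - S) = 0 := by
      rw [← hRR, mul_assoc, ← hBdef, hB0, mul_zero]
    have h2 : Q - S = 0 := by
      have := congrArg (S * ·) h1
      simpa [← mul_assoc, hSSinv] using this
    have := sub_eq_zero.mp h2
    rw [← this]
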